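/- Let θ, ε : ℝ → Mat(n,ℝ) be differentiable curves of matrices, γ a differentiable curve of invertible matrices, and define D_t ε := ε' - (1/2)(γ' γ⁻¹ ε + ε γ⁻¹ γ') and D_t θ := θ' + (1/2)(θ γ' γ⁻¹ + γ⁻¹ γ' θ). Then the Leibniz rule holds: tr((D_t θ)ᵀ ε) + tr(θᵀ (D_t ε)) = d/dt [tr(θᵀ ε)], when θ, ε, γ, γ' are symmetric. -/

import Mathlib

open Matrix

attribute [local instance] Matrix.normedAddCommGroup Matrix.normedSpace

/-- Pointwise Leibniz rule for the Zaremba–Jaumann covariant derivative: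
with `D_t ε = ε' - (1/2)(γ' γ⁻¹ ε + ε γ⁻¹ γ')` and
`D_t θ = θ' + (1/2)(θ γ' γ⁻¹ + γ⁻¹ γ' θ)`, one has
`tr((D_t θ)ᵀ ε) + tr(θᵀ (D_t ε)) = d/dt tr(θᵀ ε)`. -/
theorem jaumann_leibniz_rule (n : ℕ)
    (γ γ' θ θ' ε ε' : ℝ → Matrix (Fin n) (Fin n) ℝ)
    (hγinv : ∀ t, IsUnit (γ t))
    (hγ : ∀ t, HasDerivAt γ (γ' t) t)
    (hθ : ∀ t, HasDerivAt θ (θ' t) t)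
    (hε : ∀ t, HasDerivAt ε (ε' t) t)
    (hγs : ∀ t, (γ t).IsSymm) (hγ's : ∀ t, (γ' t).IsSymm)
    (hθs : ∀ t, (θ t).IsSymm) (hεs : ∀ t, (ε t).IsSymm) :
    ∀ t, HasDerivAt (fun s => ((θ s)ᵀ * ε s).trace)
      (((θ' t + (1 / 2 : ℝ) • (θ t * γ' t * (γ t)⁻¹ + (γ t)⁻¹ * γ' t * θ t))ᵀ * ε t).trace
        + ((θ t)ᵀ *
          (ε' t - (1 / 2 : ℝ) • (γ' t * (γ t)⁻¹ * ε t + ε t * (γ t)⁻¹ * γ' t))).trace)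
      t := by
  intro t
  -- entrywise derivatives
  have hentry : ∀ (f f' : ℝ → Matrix (Fin n) (Fin n) ℝ), (∀ s, HasDerivAt f (f' s) s) →
      ∀ (i j : Fin n), HasDerivAt (fun s => f s i j) (f' t i j) t := by
    intro f f' hf i j
    exact (LinearMap.toContinuousLinearMap
      { toFun := fun M : Matrix (Fin n) (Fin n) ℝ => M i j
        map_add' := fun _ _ => rfl
        map_smul' := by intros; simp [Matrix.smul_apply] }).hasFDerivAt.comp_hasDerivAt t (hf t)
  -- the plain product rule for the trace pairing
  have key : HasDerivAt (fun s => ((θ s)ᵀ * ε s).trace)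
      (((θ' t)ᵀ * ε t).trace + ((θ t)ᵀ * ε' t).trace) t := by
    have hfun : (fun s => ((θ s)ᵀ * ε s).trace)
        = fun s => ∑ i, ∑ j, θ s j i * ε s j i := by
      funext s
      simp [Matrix.trace, Matrix.diag, Matrix.mul_apply, Matrix.transpose_apply]
    rw [hfun]
    have h : HasDerivAt (fun s => ∑ i, ∑ j, θ s j i * ε s j i)
        (∑ i, ∑ j, (θ' t j i * ε t j i + θ t j i * ε' t j i)) t :=
      HasDerivAt.fun_sum fun i _ => HasDerivAt.fun_sum fun j _ =>
        (hentry θ θ' hθ j i).mul (hentry ε ε' hε j i)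
    convert h using 1
    simp [Matrix.trace, Matrix.diag, Matrix.mul_apply, Matrix.transpose_apply,
      Finset.sum_add_distrib]
  convert key using 1
  have hGi : ((γ t)⁻¹)ᵀ = (γ t)⁻¹ := by
    rw [Matrix.transpose_nonsing_inv, (hγs t).eq]
  -- the two correction terms
  have cancel1 : ((θ t * γ' t * (γ t)⁻¹)ᵀ * ε t).trace
      = ((θ t)ᵀ * (ε t * (γ t)⁻¹ * γ' t)).trace := by
    simp only [Matrix.transpose_mul, hGi, (hγ's t).eq, (hθs t).eq]
    rw [Matrix.trace_mul_comm]
    simp only [Matrix.mul_assoc]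
    rw [Matrix.trace_mul_comm]
    simp only [Matrix.mul_assoc]
    rw [Matrix.trace_mul_comm]
    simp only [Matrix.mul_assoc]
    rw [Matrix.trace_mul_comm]
    simp only [Matrix.mul_assoc]
  have cancel2 : (((γ t)⁻¹ * γ' t * θ t)ᵀ * ε t).trace
      = ((θ t)ᵀ * (γ' t * (γ t)⁻¹ * ε t)).trace := by
    simp only [Matrix.transpose_mul, hGi, (hγ's t).eq, (hθs t).eq]
    simp only [Matrix.mul_assoc]
  simp only [Matrix.transpose_add, Matrix.transpose_smul, Matrix.add_mul, Matrix.smul_mul,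
    Matrix.mul_sub, Matrix.mul_smul, Matrix.mul_add, Matrix.trace_add, Matrix.trace_sub,
    Matrix.trace_smul]
  rw [cancel1, cancel2]
  ring
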